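/- Let (Ω, μ) be a finite measure space, a < 0 < b, v ∈ L∞(μ) ∩ L²(μ), m₀ the unique root of M(m) = ∫ min(b, max(a, v + m)) dμ, and assume the inactive set I = {a < v + m₀ < b} has measure μ(I) > 0. If ṽ ∈ L²(μ) satisfies ‖ṽ - v‖_{L¹} ≤ η with η sufficiently small, and m̃ is a root of M̃(m) = ∫ min(b, max(a, ṽ + m)) dμ, then |m̃ - m₀| ≤ C η / μ(I_δ) where I_δ = {a + δ ≤ v + m₀ ≤ b - δ} for suitable δ > 0 and a constant C depending only on a, b. -/

import Mathlib

open MeasureTheory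

lemma clip_mono' (a b : ℝ) {s t : ℝ} (h : s ≤ t) :
    min b (max a s) ≤ min b (max a t) :=
  min_le_min le_rfl (max_le_max le_rfl h)

lemma clip_lip' (a b s t : ℝ) : |min b (max a s) - min b (max a t)| ≤ |s - t| := by
  rcases abs_cases (s - t) with ⟨h1, h2⟩ | ⟨h1, h2⟩ <;>
    (rw [abs_sub_le_iff]; constructor <;>
      (simp only [min_def, max_def]; split_ifs <;> linarith))

lemma clip_int {Ω : Type*} [MeasurableSpace Ω] (μ : Measure Ω) [IsFiniteMeasure μ]
    (a b : ℝ) (hab : a ≤ b) (w : Ω → ℝ) (hw : Measurable w) (m : ℝ) :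
    Integrable (fun x => min b (max a (w x + m))) μ := by
  refine (integrable_const (max b (-a))).mono'
    ((measurable_const.min (measurable_const.max (hw.add_const m))).aestronglyMeasurable)
    (ae_of_all μ fun x => ?_)
  rw [Real.norm_eq_abs, abs_le]
  have h1 : a ≤ min b (max a (w x + m)) := le_min hab (le_max_left a _)
  have h2 : min b (max a (w x + m)) ≤ b := min_le_left _ _
  have h3 := le_max_left b (-a)
  have h4 := le_max_right b (-a)
  constructor <;> linarith

theorem stmt_16
    {Ω : Type*} [MeasurableSpace Ω] (μ : Measure Ω) [IsFiniteMeasure μ]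
    (a b : ℝ) (ha : a < 0) (hb : 0 < b)
    (v : Ω → ℝ) (hvmeas : Measurable v)
    (Cv : ℝ) (hvbd : ∀ᵐ x ∂μ, |v x| ≤ Cv) (hvL2 : MemLp v 2 μ)
    (M : ℝ → ℝ) (hM : ∀ m, M m = ∫ x, min b (max a (v x + m)) ∂μ)
    (m₀ : ℝ) (hm₀ : M m₀ = 0) (huniq : ∀ m, M m = 0 → m = m₀)
    (hI : 0 < μ {x | a < v x + m₀ ∧ v x + m₀ < b}) :
    ∃ δ : ℝ, 0 < δ ∧ ∃ C : ℝ, 0 < C ∧ ∃ η₀ : ℝ, 0 < η₀ ∧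
      ∀ vt : Ω → ℝ, Measurable vt → MemLp vt 2 μ →
        ∀ η : ℝ, 0 < η → η ≤ η₀ → (∫ x, |vt x - v x| ∂μ) ≤ η →
        ∀ mt : ℝ, (∫ x, min b (max a (vt x + mt)) ∂μ) = 0 →
          |mt - m₀| ≤ C * η /
            (μ {x | a + δ ≤ v x + m₀ ∧ v x + m₀ ≤ b - δ}).toReal := by
  have hab : a ≤ b := le_of_lt (lt_trans ha hb)
  -- choose δ > 0 with positive measure of the δ-interior inactive set
  set In : ℕ → Set Ω :=
    fun n => {x | a + 1 / (n + 1 : ℝ) ≤ v x + m₀ ∧ v x + m₀ ≤ b - 1 / (n + 1 : ℝ)} with hIn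
  have hsub : {x | a < v x + m₀ ∧ v x + m₀ < b} ⊆ ⋃ n, In n := by
    intro x ⟨hx1, hx2⟩
    have hε : (0 : ℝ) < min (v x + m₀ - a) (b - (v x + m₀)) := by
      apply lt_min <;> linarith
    obtain ⟨n, hn⟩ := exists_nat_one_div_lt hε
    have h1 : 1 / (n + 1 : ℝ) < v x + m₀ - a := lt_of_lt_of_le hn (min_le_left _ _)
    have h2 : 1 / (n + 1 : ℝ) < b - (v x + m₀) := lt_of_lt_of_le hn (min_le_right _ _)
    exact Set.mem_iUnion.mpr ⟨n, ⟨by linarith, by linarith⟩⟩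
  have hexn : ∃ n : ℕ, 0 < μ (In n) := by
    by_contra h
    push_neg at h
    have h0 : μ (⋃ n, In n) = 0 :=
      measure_iUnion_null fun n => le_antisymm (h n) (zero_le)
    have := lt_of_lt_of_le hI (measure_mono hsub)
    rw [h0] at this
    exact lt_irrefl _ this
  obtain ⟨n, hn⟩ := hexn
  set δ : ℝ := 1 / (n + 1 : ℝ) with hδdef
  have hδ : 0 < δ := by positivity
  set Iδ : Set Ω := {x | a + δ ≤ v x + m₀ ∧ v x + m₀ ≤ b - δ} with hIδdef
  have hIδmeas : MeasurableSet Iδ :=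
    (measurableSet_le measurable_const (hvmeas.add_const m₀)).inter
      (measurableSet_le (hvmeas.add_const m₀) measurable_const)
  set μI : ℝ := (μ Iδ).toReal with hμIdef
  have hμI : 0 < μI :=
    ENNReal.toReal_pos (ne_of_gt hn) (measure_ne_top μ _)
  -- slope bounds for M near m₀
  have key : ∀ t : ℝ, 0 ≤ t → t ≤ δ →
      t * μI ≤ M (m₀ + t) ∧ M (m₀ - t) ≤ -(t * μI) := by
    intro t ht0 htδ
    have hintp := clip_int μ a b hab v hvmeas (m₀ + t)
    have hint0 := clip_int μ a b hab v hvmeas m₀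
    have hintm := clip_int μ a b hab v hvmeas (m₀ - t)
    have hind : Integrable (Iδ.indicator fun _ => t) μ :=
      (integrable_const t).indicator hIδmeas
    have hindval : ∫ x, Iδ.indicator (fun _ => t) x ∂μ = t * μI := by
      rw [integral_indicator_const t hIδmeas, smul_eq_mul, mul_comm]; rfl
    constructor
    · have hpt : ∀ x, Iδ.indicator (fun _ => t) x
          ≤ min b (max a (v x + (m₀ + t))) - min b (max a (v x + m₀)) := by
        intro x
        by_cases hx : x ∈ Iδ
        · obtain ⟨hx1, hx2⟩ := id hx
          rw [Set.indicator_of_mem hx]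
          have e1 : min b (max a (v x + m₀)) = v x + m₀ := by
            rw [max_eq_right (by linarith), min_eq_right (by linarith)]
          have e2 : min b (max a (v x + (m₀ + t))) = v x + (m₀ + t) := by
            rw [max_eq_right (by linarith), min_eq_right (by linarith)]
          rw [e1, e2]; linarith
        · rw [Set.indicator_of_notMem hx]
          have := clip_mono' a b (show v x + m₀ ≤ v x + (m₀ + t) by linarith)
          linarith
      have := integral_mono hind (hintp.sub hint0) hpt
      simp only [Pi.sub_apply] at this
      rw [integral_sub hintp hint0, hindval] at this
      rw [hM (m₀ + t)]
      have hzero : ∫ x, min b (max a (v x + m₀)) ∂μ = 0 := by rw [← hM]; exact hm₀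
      linarith
    · have hpt : ∀ x, Iδ.indicator (fun _ => t) x
          ≤ min b (max a (v x + m₀)) - min b (max a (v x + (m₀ - t))) := by
        intro x
        by_cases hx : x ∈ Iδ
        · obtain ⟨hx1, hx2⟩ := id hx
          rw [Set.indicator_of_mem hx]
          have e1 : min b (max a (v x + m₀)) = v x + m₀ := by
            rw [max_eq_right (by linarith), min_eq_right (by linarith)]
          have e2 : min b (max a (v x + (m₀ - t))) = v x + (m₀ - t) := by
            rw [max_eq_right (by linarith), min_eq_right (by linarith)]
          rw [e1, e2]; linarith
        · rw [Set.indicator_of_notMem hx]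
          have := clip_mono' a b (show v x + (m₀ - t) ≤ v x + m₀ by linarith)
          linarith
      have := integral_mono hind (hint0.sub hintm) hpt
      simp only [Pi.sub_apply] at this
      rw [integral_sub hint0 hintm, hindval] at this
      rw [hM (m₀ - t)]
      have hzero : ∫ x, min b (max a (v x + m₀)) ∂μ = 0 := by rw [← hM]; exact hm₀
      linarith
  refine ⟨δ, hδ, 2, two_pos, δ * μI / 2, by positivity, ?_⟩
  intro vt hvtmeas hvtL2 η hη hηle hL1 mt hmt
  set s : ℝ := 2 * η / μI with hsdef
  have hs0 : 0 < s := by positivity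
  have hsμI : s * μI = 2 * η := div_mul_cancel₀ (2 * η) (ne_of_gt hμI)
  have hsδ : s ≤ δ := by
    rw [hsdef, div_le_iff₀ hμI]
    nlinarith
  -- integrability of |vt - v|
  have hdiffint : Integrable (fun x => |vt x - v x|) μ :=
    (((hvtL2.sub hvL2).mono_exponent (by norm_num)).integrable le_rfl).abs
  -- perturbation bound
  have pert : ∀ m : ℝ,
      |(∫ x, min b (max a (vt x + m)) ∂μ) - M m| ≤ ∫ x, |vt x - v x| ∂μ := by
    intro m
    have h1 := clip_int μ a b hab vt hvtmeas m
    have h2 := clip_int μ a b hab v hvmeas m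
    rw [hM m, ← integral_sub h1 h2]
    calc |∫ x, (min b (max a (vt x + m)) - min b (max a (v x + m))) ∂μ|
        ≤ ∫ x, |min b (max a (vt x + m)) - min b (max a (v x + m))| ∂μ := by
          simpa [Real.norm_eq_abs] using
            norm_integral_le_integral_norm
              (fun x => min b (max a (vt x + m)) - min b (max a (v x + m)))
      _ ≤ ∫ x, |vt x - v x| ∂μ := by
          refine integral_mono ((h1.sub h2).abs) hdiffint fun x => ?_
          have h := clip_lip' a b (vt x + m) (v x + m)
          have e : vt x + m - (v x + m) = vt x - v x := by ring
          rwa [e] at h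
  have Mtmono : ∀ m m' : ℝ, m ≤ m' →
      (∫ x, min b (max a (vt x + m)) ∂μ) ≤ ∫ x, min b (max a (vt x + m')) ∂μ := by
    intro m m' hmm'
    exact integral_mono (clip_int μ a b hab vt hvtmeas m) (clip_int μ a b hab vt hvtmeas m')
      (fun x => clip_mono' a b (by linarith))
  obtain ⟨hMup, hMdn⟩ := key s (le_of_lt hs0) hsδ
  -- upper bound: mt ≤ m₀ + s
  have hup : mt ≤ m₀ + s := by
    by_contra h
    push_neg at h
    have h1 : (∫ x, min b (max a (vt x + (m₀ + s))) ∂μ) ≥ M (m₀ + s) - η := by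
      have := (abs_le.mp (pert (m₀ + s))).1
      linarith
    have h2 : (0 : ℝ) < ∫ x, min b (max a (vt x + (m₀ + s))) ∂μ := by
      have : s * μI = 2 * η := hsμI
      linarith
    have h3 := Mtmono (m₀ + s) mt (le_of_lt h)
    rw [hmt] at h3
    linarith
  -- lower bound: m₀ - s ≤ mt
  have hdn : m₀ - s ≤ mt := by
    by_contra h
    push_neg at h
    have h1 : (∫ x, min b (max a (vt x + (m₀ - s))) ∂μ) ≤ M (m₀ - s) + η := by
      have := (abs_le.mp (pert (m₀ - s))).2
      linarith
    have h2 : (∫ x, min b (max a (vt x + (m₀ - s))) ∂μ) < 0 := by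
      have : s * μI = 2 * η := hsμI
      linarith
    have h3 := Mtmono mt (m₀ - s) (le_of_lt h)
    rw [hmt] at h3
    linarith
  have : |mt - m₀| ≤ s := abs_le.mpr ⟨by linarith, by linarith⟩
  calc |mt - m₀| ≤ s := this
    _ = 2 * η / (μ {x | a + δ ≤ v x + m₀ ∧ v x + m₀ ≤ b - δ}).toReal := by
        rw [hsdef, ← hμIdef]
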